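/- For any ring R and any index set A, the product functor from the A-indexed product of copies of the category of R-modules to the category of R-modules, sending a family (M_a)_{a∈A} to the product module ∏_{a∈A} M_a, is a monadic functor (its left adjoint is the diagonal functor V ↦ (V)_{a∈A}). -/

import Mathlib

open CategoryTheory

universe u

variable (R : Type u) [Ring R] (A : Type u)

/-- The product functor `(Mod R)^A ⥤ Mod R`, `(M_a)_{a ∈ A} ↦ ∏_a M_a`. -/
@[simps]
def productFunctor : (∀ _ : A, ModuleCat.{u} R) ⥤ ModuleCat.{u} R where
  obj M := ModuleCat.of R (∀ a, M a)
  map f := ModuleCat.ofHom (LinearMap.pi (fun a => (f a).hom.comp (LinearMap.proj a)))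
  map_id := by intros; rfl
  map_comp := by intros; rfl

/-- The diagonal functor `Mod R ⥤ (Mod R)^A`, `V ↦ (V)_{a ∈ A}`. -/
@[simps]
def diagonalFunctor : ModuleCat.{u} R ⥤ (∀ _ : A, ModuleCat.{u} R) where
  obj V := fun _ => V
  map f := fun _ => f

open Limits

/-- The diagonal functor is left adjoint to the product functor. -/
def diagProdAdj : diagonalFunctor R A ⊣ productFunctor R A :=
  Adjunction.mkOfHomEquiv
    { homEquiv := fun V M =>
        { toFun := fun f => ModuleCat.ofHom (LinearMap.pi (fun a => (f a).hom))
          invFun := fun g a => ModuleCat.ofHom ((LinearMap.proj a).comp g.hom)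
          left_inv := fun f => rfl
          right_inv := fun g => rfl }
      homEquiv_naturality_left_symm := by intros; rfl
      homEquiv_naturality_right := by intros; rfl }

instance : HasColimits (∀ _ : A, ModuleCat.{u} R) :=
  Adjunction.has_colimits_of_equivalence (piEquivalenceFunctorDiscrete A (ModuleCat.{u} R)).functor

instance : (productFunctor R A).ReflectsIsomorphisms := by
  constructor
  intro M N f hf
  classical
  have hF : Function.Bijective ((productFunctor R A).map f) :=
    (ConcreteCategory.isIso_iff_bijective _).mp hf
  have : ∀ a, IsIso (f a) := by
    intro a
    rw [ConcreteCategory.isIso_iff_bijective]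
    constructor
    · show Function.Injective ⇑(f a).hom
      rw [← LinearMap.ker_eq_bot, LinearMap.ker_eq_bot']
      intro x hx
      have h0 : ∀ b, f b ((Pi.single a x : (c : A) → M c) b) = 0 := by
        intro b
        by_cases hb : b = a
        · subst hb; simpa [Pi.single_eq_same] using hx
        · simp [Pi.single_eq_of_ne hb]
      have h0' : (productFunctor R A).map f (Pi.single a x : ∀ c, M c) = 0 := funext fun b => h0 b
      have := hF.injective (a₁ := (Pi.single a x : ∀ c, M c)) (a₂ := (0 : ∀ c, M c)) (h0'.trans (map_zero _).symm)
      simpa using congrFun this a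
    · show Function.Surjective ⇑(f a).hom
      intro y
      obtain ⟨u, hu⟩ := hF.surjective (Pi.single a y : ∀ c, N c)
      exact ⟨u a, (congrFun hu a).trans (by simp)⟩
  refine ⟨⟨fun a => CategoryTheory.inv (f a), ?_, ?_⟩⟩
  · funext a; exact IsIso.hom_inv_id (f a)
  · funext a; exact IsIso.inv_hom_id (f a)

section Preservation

variable {R A}
variable {M N : A → ModuleCat.{u} R} (f g : M ⟶ N)

/-- The componentwise submodule `range (f a - g a)`. -/
private def prodSub : ∀ a, Submodule R (N a) := fun a => LinearMap.range ((f a).hom - (g a).hom)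

/-- The componentwise quotient object. -/
private def QObj : A → ModuleCat.{u} R := fun a => ModuleCat.of R (N a ⧸ prodSub f g a)

/-- The componentwise quotient projection. -/
private def piQ : N ⟶ QObj f g := fun a => ModuleCat.ofHom (prodSub f g a).mkQ

private theorem coforkD_w : f ≫ piQ f g = g ≫ piQ f g := by
  funext a
  apply ModuleCat.hom_ext
  apply LinearMap.ext
  intro x
  show Submodule.Quotient.mk (f a x) = Submodule.Quotient.mk (g a x)
  rw [Submodule.Quotient.eq]
  exact ⟨x, rfl⟩

/-- The componentwise coequalizer cofork in the pi category. -/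
private noncomputable def coforkD : Cofork f g :=
  Cofork.ofπ (piQ f g) (coforkD_w f g)

private noncomputable def coforkDIsColimit : IsColimit (coforkD f g) := by
  refine Cofork.IsColimit.mk _
    (fun s => fun a => ModuleCat.ofHom (Submodule.liftQ _ (s.π a).hom ?_)) (fun s => ?_) (fun s m hm => ?_)
  · rintro _ ⟨x, rfl⟩
    rw [LinearMap.mem_ker, LinearMap.sub_apply, map_sub, sub_eq_zero]
    exact congrArg (fun h => ModuleCat.Hom.hom h x) (congrFun s.condition a)
  · funext a
    apply ModuleCat.hom_ext
    exact Submodule.liftQ_mkQ _ _ _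
  · funext a
    apply ModuleCat.hom_ext
    refine Submodule.linearMap_qext _ ?_
    exact (congrArg ModuleCat.Hom.hom (congrFun hm a)).trans (Submodule.liftQ_mkQ _ _ _).symm

private def piK : Submodule R (∀ a, N a) := Submodule.pi Set.univ (prodSub f g)

private noncomputable def quotPiMap :
    ((∀ a, N a) ⧸ piK f g) →ₗ[R] ∀ a, (N a ⧸ prodSub f g a) :=
  Submodule.liftQ _ (LinearMap.pi fun a => ((prodSub f g a).mkQ).comp (LinearMap.proj a))
    (by
      intro x hx
      rw [LinearMap.mem_ker]
      funext a
      exact (Submodule.Quotient.mk_eq_zero _).mpr (hx a trivial))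

private theorem quotPiMap_mk (y : ∀ a, N a) :
    quotPiMap f g (Submodule.Quotient.mk y) = fun a => (prodSub f g a).mkQ (y a) :=
  rfl

private theorem quotPiMap_bijective : Function.Bijective (quotPiMap f g) := by
  constructor
  · rw [← LinearMap.ker_eq_bot, LinearMap.ker_eq_bot']
    intro q hq
    induction q using Submodule.Quotient.induction_on with
    | H x =>
      rw [quotPiMap_mk] at hq
      rw [Submodule.Quotient.mk_eq_zero]
      intro a _
      show x a ∈ prodSub f g a
      rw [← Submodule.Quotient.mk_eq_zero]
      exact congrFun hq a
  · intro q
    choose y hy using fun a => (prodSub f g a).mkQ_surjective (q a)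
    exact ⟨Submodule.Quotient.mk y, by rw [quotPiMap_mk]; funext a; exact hy a⟩

private noncomputable def quotPiEquiv :
    ((∀ a, N a) ⧸ piK f g) ≃ₗ[R] ∀ a, (N a ⧸ prodSub f g a) :=
  LinearEquiv.ofBijective (quotPiMap f g) (quotPiMap_bijective f g)

private theorem quotPiEquiv_mk (y : ∀ a, N a) :
    quotPiEquiv f g (Submodule.Quotient.mk y) = fun a => (prodSub f g a).mkQ (y a) :=
  rfl

private theorem pi_le_ker (s : Cofork ((productFunctor R A).map f) ((productFunctor R A).map g)) :
    piK f g ≤ LinearMap.ker ((Cofork.π s).hom : (∀ a, N a) →ₗ[R] s.pt) := by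
  intro k hk
  have hx : ∀ a, ∃ x, (f a - g a) x = k a := fun a => (hk a trivial)
  choose x hx using hx
  have hk' : (productFunctor R A).map f x - (productFunctor R A).map g x = k := by
    funext a
    show f a (x a) - g a (x a) = k a
    rw [← hx a]
    rfl
  show (Cofork.π s).hom k = 0
  rw [← hk', map_sub, sub_eq_zero]
  exact congrArg (fun h => ModuleCat.Hom.hom h x) s.condition

private noncomputable def mappedIsColimit :
    IsColimit (Cofork.ofπ ((productFunctor R A).map (piQ f g))
      (by rw [← Functor.map_comp, ← Functor.map_comp, coforkD_w]) :
        Cofork ((productFunctor R A).map f) ((productFunctor R A).map g)) := by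
  refine Cofork.IsColimit.mk _
    (fun s => ModuleCat.ofHom ((Submodule.liftQ (M := ∀ a, N a) (piK f g) (s.π.hom : (∀ a, N a) →ₗ[R] s.pt) (pi_le_ker f g s)).comp
      (quotPiEquiv f g).symm.toLinearMap)) (fun s => ?_) (fun s m hm => ?_)
  · apply ModuleCat.hom_ext
    apply LinearMap.ext
    intro y
    show (Submodule.liftQ (M := ∀ a, N a) (piK f g) (s.π.hom : (∀ a, N a) →ₗ[R] s.pt) (pi_le_ker f g s))
      ((quotPiEquiv f g).symm (fun a => (prodSub f g a).mkQ (y a))) = s.π.hom y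
    have he : (quotPiEquiv f g).symm (fun a => (prodSub f g a).mkQ (y a)) =
        Submodule.Quotient.mk y := by
      apply (quotPiEquiv f g).injective
      exact (LinearEquiv.apply_symm_apply _ _).trans (quotPiEquiv_mk f g y).symm
    rw [he]
    rfl
  · apply ModuleCat.hom_ext
    apply LinearMap.ext
    intro q
    choose y hy using fun a => (prodSub f g a).mkQ_surjective (q a)
    have hq : (fun a => (prodSub f g a).mkQ (y a)) = q := funext fun a => hy a
    have h1 : m.hom q = s.π.hom y := by
      conv_lhs => rw [← hq]
      exact congrArg (fun h => ModuleCat.Hom.hom h y) hm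
    have he : (quotPiEquiv f g).symm q = Submodule.Quotient.mk y := by
      apply (quotPiEquiv f g).injective
      exact (LinearEquiv.apply_symm_apply _ _).trans (by rw [quotPiEquiv_mk, hq])
    show m.hom q = (Submodule.liftQ (M := ∀ a, N a) (piK f g) (s.π.hom : (∀ a, N a) →ₗ[R] s.pt) (pi_le_ker f g s)) ((quotPiEquiv f g).symm q)
    rw [h1, he]
    rfl

private noncomputable def prodPreserves :
    PreservesColimit (parallelPair f g) (productFunctor R A) :=
  preservesColimit_of_preserves_colimit_cocone (coforkDIsColimit f g)
    ((isColimitMapCoconeCoforkEquiv _ _).symm (mappedIsColimit f g))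

end Preservation

noncomputable instance : Monad.PreservesColimitOfIsReflexivePair (productFunctor R A) := by
  refine ⟨?_⟩
  intro X Y f g _
  exact prodPreserves f g

/-- The product functor `(Mod R)^A ⥤ Mod R` is monadic; its left
adjoint is the diagonal functor. -/
theorem productFunctor_monadic :
    Nonempty (diagonalFunctor R A ⊣ productFunctor R A) ∧
      Nonempty (MonadicRightAdjoint (productFunctor R A)) := by
  refine ⟨⟨diagProdAdj R A⟩, ⟨?_⟩⟩
  exact Monad.monadicOfHasPreservesReflexiveCoequalizersOfReflectsIsomorphisms (diagProdAdj R A)
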